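/- Let G be a group with local retractions and let δ ∈ G be an element of infinite order. Then for every positive integer d there exists a finite-index subgroup K of G such that δ^d ∈ K, δ^k ∉ K for 0 < k < d, and there is a retraction from K onto ⟨δ^d⟩. -/

import Mathlib

/-- `G` virtually retracts onto the subgroup `H`. -/
def VirtuallyRetractsOnto {G : Type*} [Group G] (H : Subgroup G) : Prop :=
  ∃ K : Subgroup G, K.FiniteIndex ∧ H ≤ K ∧
    ∃ ρ : K →* G, (∀ k : K, ρ k ∈ H) ∧ (∀ k : K, (k : G) ∈ H → ρ k = k)

/-- `G` has local retractions. -/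
def HasLocalRetractions (G : Type*) [Group G] : Prop :=
  ∀ H : Subgroup G, H.FG → VirtuallyRetractsOnto H

/-- If `G` has local retractions and `δ ∈ G` has infinite order, then for every
`d > 0` there is a finite-index subgroup `K ≤ G` with `δ^d ∈ K`, `δ^k ∉ K` for
`0 < k < d`, and a retraction from `K` onto `⟨δ^d⟩`. -/
theorem controlled_cover_of_localRetractions {G : Type*} [Group G]
    (hG : HasLocalRetractions G) (δ : G) (hδ : ¬ IsOfFinOrder δ)
    (d : ℕ) (hd : 0 < d) :
    ∃ K : Subgroup G, K.FiniteIndex ∧ δ ^ d ∈ K ∧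
      (∀ k : ℕ, 0 < k → k < d → δ ^ k ∉ K) ∧
      ∃ ρ : K →* G,
        (∀ x : K, ρ x ∈ Subgroup.zpowers (δ ^ d)) ∧
        (∀ x : K, (x : G) ∈ Subgroup.zpowers (δ ^ d) → ρ x = x) := by
  have hinj : Function.Injective fun n : ℤ => δ ^ n :=
    injective_zpow_iff_not_isOfFinOrder.mpr hδ
  -- apply local retractions to ⟨δ⟩
  have hfg : (Subgroup.zpowers δ).FG :=
    ⟨{δ}, by simp [Subgroup.zpowers_eq_closure]⟩
  obtain ⟨K₀, hK₀fi, hle, ρ₀, hρ₀mem, hρ₀id⟩ := hG _ hfg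
  -- exponent function
  have hexp : ∀ x : K₀, ∃ n : ℤ, δ ^ n = (ρ₀ x : G) := fun x => hρ₀mem x
  choose φ hφ using hexp
  have hadd : ∀ x y : K₀, φ (x * y) = φ x + φ y := by
    intro x y
    apply hinj
    simp only
    rw [zpow_add, hφ, hφ, hφ, map_mul]
  have hφone : φ 1 = 0 := by
    apply hinj; simp only [zpow_zero]; rw [hφ, map_one]
  have hφval : ∀ x : K₀, (x : G) ∈ Subgroup.zpowers δ → δ ^ φ x = (x : G) := by
    intro x hx
    rw [hφ, hρ₀id x hx]
  have hδmemN : ∀ n : ℕ, δ ^ n ∈ K₀ := fun n =>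
    hle ⟨(n : ℤ), zpow_natCast δ n⟩
  -- the kernel subgroup
  let K' : Subgroup K₀ :=
    { carrier := {x | (d : ℤ) ∣ φ x}
      one_mem' := by simp [hφone]
      mul_mem' := by
        intro a b ha hb
        simp only [Set.mem_setOf_eq, hadd] at *
        exact dvd_add ha hb
      inv_mem' := by
        intro a ha
        simp only [Set.mem_setOf_eq] at *
        have : φ a⁻¹ + φ a = 0 := by rw [← hadd, inv_mul_cancel, hφone]
        have h2 : φ a⁻¹ = -φ a := by linarith
        rw [h2]; exact ha.neg_right }
  have hK'mem : ∀ x : K₀, x ∈ K' ↔ (d : ℤ) ∣ φ x := fun _ => Iff.rfl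
  -- K' has finite index in K₀ via hom to ZMod d
  haveI : NeZero d := ⟨hd.ne'⟩
  have hK'fi : K'.FiniteIndex := by
    let χ : K₀ →* Multiplicative (ZMod d) :=
      { toFun := fun x => Multiplicative.ofAdd ((φ x : ZMod d))
        map_one' := by simp [hφone]
        map_mul' := by intro x y; simp only [hadd, Int.cast_add, ofAdd_add] }
    have hker : K' = χ.ker := by
      ext x
      simp only [MonoidHom.mem_ker, hK'mem, χ, MonoidHom.coe_mk, OneHom.coe_mk,
        ofAdd_eq_one, ZMod.intCast_zmod_eq_zero_iff_dvd]
    rw [hker]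
    infer_instance
  refine ⟨K'.map K₀.subtype, ?_, ?_, ?_, ?_⟩
  · -- finite index
    constructor
    have hle' : K'.map K₀.subtype ≤ K₀ := Subgroup.map_subtype_le K'
    have hmul := Subgroup.relIndex_mul_index hle'
    have hrel : (K'.map K₀.subtype).relIndex K₀ = K'.index := by
      unfold Subgroup.relIndex
      rw [Subgroup.subgroupOf, Subgroup.comap_map_eq_self_of_injective K₀.subtype_injective]
    rw [hrel] at hmul
    rw [← hmul]
    exact mul_ne_zero hK'fi.index_ne_zero hK₀fi.index_ne_zero
  · -- δ^d ∈ K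
    refine ⟨⟨δ ^ d, hδmemN d⟩, ?_, rfl⟩
    show (d : ℤ) ∣ φ _
    have hv : δ ^ φ (⟨δ ^ d, hδmemN d⟩ : K₀) = δ ^ (d : ℤ) := by
      rw [hφval _ ⟨(d : ℤ), zpow_natCast δ d⟩, zpow_natCast]
    exact (hinj hv) ▸ dvd_refl (d : ℤ)
  · -- δ^k ∉ K for 0 < k < d
    intro k hk0 hkd hmem
    obtain ⟨x, hx, hxe⟩ := hmem
    have hxval : (x : G) = δ ^ k := hxe
    have hxz : (x : G) ∈ Subgroup.zpowers δ := ⟨(k : ℤ), by show δ ^ (k : ℤ) = (x : G); rw [zpow_natCast, hxval]⟩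
    have hk : φ x = (k : ℤ) := by
      apply hinj
      simp only
      rw [hφval x hxz, hxval, zpow_natCast]
    have hdvd : (d : ℤ) ∣ φ x := hx
    rw [hk] at hdvd
    have : (d : ℤ) ≤ (k : ℤ) := Int.le_of_dvd (by exact_mod_cast hk0) hdvd
    omega
  · -- retraction
    have hle' : K'.map K₀.subtype ≤ K₀ := Subgroup.map_subtype_le K'
    refine ⟨ρ₀.comp (Subgroup.inclusion hle'), ?_, ?_⟩
    · intro x
      obtain ⟨y, hy, hyx⟩ := x.2
      obtain ⟨m, hm⟩ := (hK'mem y).mp hy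
      have hxy : Subgroup.inclusion hle' x = y := by
        apply Subtype.ext; exact hyx.symm
      show ρ₀ (Subgroup.inclusion hle' x) ∈ _
      rw [hxy, ← hφ y, hm]
      exact ⟨m, by show (δ ^ d) ^ m = δ ^ ((d : ℤ) * m); rw [← zpow_natCast δ d, ← zpow_mul]⟩
    · intro x hx
      have hx' : (x : G) ∈ Subgroup.zpowers δ := by
        obtain ⟨m, hm⟩ := hx
        exact ⟨(d : ℤ) * m, by show δ ^ ((d : ℤ) * m) = (x : G); rw [zpow_mul, zpow_natCast]; exact hm⟩
      show ρ₀ (Subgroup.inclusion hle' x) = x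
      exact hρ₀id _ hx'
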